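/- Let k be a field of characteristic different from 2 and let X be a nonempty subset of {σ,τ,ρ}. Then the happy normalized 3-cocycle φ_X on C₂×C₂ with coefficients in k* is not a 3-coboundary. -/

import Mathlib

def IsCocycle {k : Type*} [Field k] {G : Type*} [Group G] (φ : G → G → G → kˣ) : Prop :=
  ∀ x y z t : G, φ y z t * φ x (y * z) t * φ x y z = φ (x * y) z t * φ x y (z * t)

def IsNormalized {k : Type*} [Field k] {G : Type*} [Group G] (φ : G → G → G → kˣ) : Prop :=
  ∀ x z : G, φ x 1 z = 1

def d2 {k : Type*} [Field k] {G : Type*} [Group G] (g : G → G → kˣ) : G → G → G → kˣ :=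
  fun x y z => g y z * (g (x * y) z)⁻¹ * g x (y * z) * (g x y)⁻¹

def IsCoboundary {k : Type*} [Field k] {G : Type*} [Group G] (φ : G → G → G → kˣ) : Prop :=
  ∃ g : G → G → kˣ, φ = d2 g

/-- The Klein four-group `C₂ × C₂`, written multiplicatively. -/
abbrev K : Type := Multiplicative (ZMod 2 × ZMod 2)

def σ : K := Multiplicative.ofAdd (1, 0)
def τ : K := Multiplicative.ofAdd (0, 1)
def ρ : K := Multiplicative.ofAdd (1, 1)

/-- The value `v(x, y)` taken by `φ_X` on the three arrangements `(x,y,y)`,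
`(y,x,y)`, `(y,y,x)` of the multiset `{x,y,y}`, for distinct `x, y ∈ {σ,τ,ρ}`. -/
def vX {k : Type*} [Field k] (ε : K → kˣ) : K → K → kˣ := fun x y =>
  if x = σ ∧ y = τ then ε σ * ε τ * ε ρ
  else if x = τ ∧ y = σ then 1
  else if x = ρ ∧ y = τ then ε σ * ε τ * ε ρ * ε τ
  else if x = τ ∧ y = ρ then ε τ
  else if x = ρ ∧ y = σ then ε σ
  else ε σ * ε τ * ε ρ * ε σ

/-- The happy normalized 3-cocycle `φ_X` on the Klein group, determined by the
sign function `ε` (where `ε x = -1` iff `x ∈ X`). -/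
def phiX {k : Type*} [Field k] (ε : K → kˣ) : K → K → K → kˣ := fun x y z =>
  if x = 1 ∨ y = 1 ∨ z = 1 then 1
  else if x = y ∧ y = z then ε x
  else if x = y then vX ε z x
  else if y = z then vX ε x y
  else if x = z then vX ε y x
  else ε σ * ε τ * ε ρ

theorem statement10 {k : Type*} [Field k] (hk : ringChar k ≠ 2)
    (X : Set K) (hX : X ⊆ {σ, τ, ρ}) (hne : X.Nonempty)
    (ε : K → kˣ) (hε : ∀ x : K, (x ∈ X → ε x = -1) ∧ (x ∉ X → ε x = 1)) :
    ¬ IsCoboundary (phiX ε) := by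
  rintro ⟨g, hg⟩
  obtain ⟨x, hx⟩ := hne
  have hx3 := hX hx
  have h1 : x ≠ 1 := by
    rcases hx3 with h | h | h <;> subst h <;> decide
  have h2 : x * x = 1 := by
    rcases hx3 with h | h | h <;> subst h <;> decide
  have e1 : phiX ε x x x = ε x := by simp [phiX, h1]
  have e2 : phiX ε x 1 x = (1 : kˣ) := by simp [phiX]
  have key : phiX ε x x x * phiX ε x 1 x = 1 := by
    rw [hg]
    simp only [d2, h2, one_mul, mul_one]
    have : ∀ a b c : kˣ, (c * a⁻¹ * b * c⁻¹) * (a * c⁻¹ * c * b⁻¹) = 1 := by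
      intro a b c
      rw [← div_eq_one]
      ext
      simp only [Units.val_div_eq_div_val, Units.val_mul, Units.val_inv_eq_inv_val, Units.val_one]
      field_simp
    exact this (g 1 x) (g x 1) (g x x)
  rw [e1, e2, mul_one] at key
  have hx1 : ε x = -1 := (hε x).1 hx
  rw [hx1] at key
  have hk2 : (-1 : k) = 1 := by
    have := congrArg Units.val key
    simpa using this
  have h20 : (2 : k) = 0 := by linear_combination -hk2
  exact Ring.two_ne_zero hk h20
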